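/- arXiv:1912.12433 — 4 statements merged into one kernel-verified Lean document; each statement's English description precedes it below -/
import Mathlib

section
/- Let B > 0, θ ∈ (0,1), and c = θ(1-θ)z²/(2B) with z ≠ 0. Then for s < t, ∫_s^t (t-τ)^{-1/2}(τ-s)^{-3/2} exp(-c/(τ-s)) dτ = (2πB/(θ(1-θ)(t-s)))^{1/2} · (1/|z|) · exp(-θ(1-θ)z²/(2B(t-s))). -/
open Real MeasureTheory

open Filter Set Topology

noncomputable def Egauss (x : ℝ) : ℝ := ∫ y in (0:ℝ)..x, Real.exp (-y^2)

lemma Egauss_hasDerivAt (x : ℝ) : HasDerivAt Egauss (Real.exp (-x^2)) x := by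
  have hc : Continuous fun y : ℝ => Real.exp (-y^2) := by continuity
  exact intervalIntegral.integral_hasDerivAt_right
    (hc.intervalIntegrable _ _) (hc.stronglyMeasurableAtFilter _ _) hc.continuousAt

lemma Egauss_continuous : Continuous Egauss :=
  continuous_iff_continuousAt.2 fun x => (Egauss_hasDerivAt x).continuousAt

lemma Egauss_zero : Egauss 0 = 0 := intervalIntegral.integral_same

lemma Egauss_tendsto : Tendsto Egauss atTop (𝓝 (Real.sqrt π / 2)) := by
  have hrw : (fun y : ℝ => Real.exp (-y^2)) = fun y : ℝ => Real.exp (-1 * y^2) := by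
    funext y; norm_num
  have h := MeasureTheory.intervalIntegral_tendsto_integral_Ioi (0:ℝ)
      ((integrable_exp_neg_mul_sq one_pos).integrableOn) tendsto_id
  rw [integral_gaussian_Ioi] at h
  have heq : Egauss = fun i => ∫ y in (0:ℝ)..i, Real.exp (-1 * y^2) := by
    funext i; unfold Egauss; rw [hrw]
  rw [heq]
  simpa using h

lemma sqrt_tendsto_atTop : Tendsto Real.sqrt atTop atTop := by
  apply (tendsto_rpow_atTop (y := 1/2) (by norm_num)).congr'
  filter_upwards [eventually_ge_atTop (0:ℝ)] with x hx
  rw [← Real.sqrt_eq_rpow]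

lemma key_integral (c T : ℝ) (hc : 0 < c) (hT : 0 < T) :
    (∫ u in (0:ℝ)..T, (T - u) ^ (-(1:ℝ)/2) * u ^ (-(3:ℝ)/2) * Real.exp (-c/u))
      = Real.sqrt (π / (c*T)) * Real.exp (-c/T) := by
  set f : ℝ → ℝ := fun u => (T - u) ^ (-(1:ℝ)/2) * u ^ (-(3:ℝ)/2) * Real.exp (-c/u) with hf
  set M : ℝ := 2 * Real.exp (-c/T) / Real.sqrt (c*T) with hM
  set G : ℝ → ℝ := fun u =>
    if 0 < u then M * (Real.sqrt π / 2 - Egauss (Real.sqrt (c/u - c/T))) else 0 with hG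
  have hint : IntervalIntegrable f volume 0 T := by
    have h1 : IntervalIntegrable (fun x : ℝ => x ^ (-(1:ℝ)/2)) volume 0 T :=
      intervalIntegral.intervalIntegrable_rpow' (by norm_num)
    have h2 : IntervalIntegrable (fun u : ℝ => (T - u) ^ (-(1:ℝ)/2)) volume 0 T := by
      simpa using (h1.comp_sub_left T).symm
    have h3 : IntervalIntegrable
        (fun u : ℝ => 4 * Real.sqrt T / c^2 * (T - u) ^ (-(1:ℝ)/2)) volume 0 T :=
      h2.const_mul _
    apply h3.mono_fun'
    · apply Measurable.aestronglyMeasurable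
      fun_prop
    · rw [Set.uIoc_of_le hT.le]
      filter_upwards [ae_restrict_mem measurableSet_Ioc] with u hu
      have hu0 : 0 < u := hu.1
      have huT : u ≤ T := hu.2
      have hexp : Real.exp (-c/u) ≤ 4 * u^2 / c^2 := by
        have h1' : c/(2*u) ≤ Real.exp (c/(2*u)) := by
          have := Real.add_one_le_exp (c/(2*u)); linarith
        have h2' : (c/(2*u))^2 ≤ Real.exp (c/(2*u))^2 :=
          pow_le_pow_left₀ (by positivity) h1' 2
        have h3' : Real.exp (c/(2*u))^2 = Real.exp (c/u) := by
          rw [← Real.exp_nat_mul]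
          congr 1
          field_simp
          ring
        rw [h3'] at h2'
        rw [neg_div, Real.exp_neg]
        have hcu : 0 < (c/(2*u))^2 := by positivity
        calc (Real.exp (c/u))⁻¹ ≤ ((c/(2*u))^2)⁻¹ := inv_anti₀ hcu h2'
          _ = 4*u^2/c^2 := by
              field_simp
              ring
      have key : u ^ (-(3:ℝ)/2) * Real.exp (-c/u) ≤ 4 * Real.sqrt T / c^2 := by
        have h4 : u ^ (-(3:ℝ)/2) * Real.exp (-c/u) ≤ u ^ (-(3:ℝ)/2) * (4*u^2/c^2) :=
          mul_le_mul_of_nonneg_left hexp (Real.rpow_nonneg hu0.le _)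
        have h6 : u ^ (-(3:ℝ)/2) * u ^ ((2:ℕ):ℝ) = u ^ ((1:ℝ)/2) := by
          rw [← Real.rpow_add hu0]; norm_num
        have h5 : u ^ (-(3:ℝ)/2) * (4*u^2/c^2) = 4 * Real.sqrt u / c^2 := by
          rw [Real.sqrt_eq_rpow, ← h6, Real.rpow_natCast]
          ring
        rw [h5] at h4
        refine h4.trans ?_
        have hs := Real.sqrt_le_sqrt huT
        gcongr
      have hfnn : 0 ≤ f u := by
        apply mul_nonneg (mul_nonneg (Real.rpow_nonneg (by linarith) _)
          (Real.rpow_nonneg hu0.le _)) (Real.exp_nonneg _)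
      rw [Real.norm_of_nonneg hfnn]
      calc f u = (T-u)^(-(1:ℝ)/2) * (u^(-(3:ℝ)/2) * Real.exp (-c/u)) := by
            rw [hf]; ring
        _ ≤ (T-u)^(-(1:ℝ)/2) * (4 * Real.sqrt T / c^2) :=
            mul_le_mul_of_nonneg_left key (Real.rpow_nonneg (by linarith) _)
        _ = 4 * Real.sqrt T / c^2 * (T-u)^(-(1:ℝ)/2) := mul_comm _ _
  have hG0' : G 0 = 0 := by simp [hG]
  have hcont : ContinuousOn G (Icc 0 T) := by
    intro x hx
    rcases eq_or_lt_of_le hx.1 with h0 | h0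
    · subst h0
      have hlim : Tendsto G (𝓝[>] (0:ℝ)) (𝓝 0) := by
        have h1 : Tendsto (fun u : ℝ => c/u - c/T) (𝓝[>] (0:ℝ)) atTop := by
          apply tendsto_atTop_add_const_right
          have := tendsto_inv_nhdsGT_zero.const_mul_atTop hc
          exact this.congr (fun x => (div_eq_mul_inv c x).symm)
        have h2 : Tendsto (fun u : ℝ => Real.sqrt (c/u - c/T)) (𝓝[>] (0:ℝ)) atTop :=
          sqrt_tendsto_atTop.comp h1
        have h3 : Tendsto (fun u : ℝ => Egauss (Real.sqrt (c/u - c/T))) (𝓝[>] (0:ℝ))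
            (𝓝 (Real.sqrt π / 2)) := Egauss_tendsto.comp h2
        have h4 : Tendsto
            (fun u : ℝ => M * (Real.sqrt π/2 - Egauss (Real.sqrt (c/u - c/T))))
            (𝓝[>] (0:ℝ)) (𝓝 (M * (Real.sqrt π/2 - Real.sqrt π/2))) :=
          (tendsto_const_nhds.sub h3).const_mul M
        rw [sub_self, mul_zero] at h4
        apply h4.congr'
        filter_upwards [self_mem_nhdsWithin] with v hv
        simp [hG, Set.mem_Ioi.mp hv]
      have hIci : ContinuousWithinAt G (Ici 0) 0 := by
        rw [← continuousWithinAt_Ioi_iff_Ici]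
        show Tendsto G (𝓝[>] (0:ℝ)) (𝓝 (G 0))
        rw [hG0']
        exact hlim
      exact hIci.mono Icc_subset_Ici_self
    · have hGf : ContinuousAt
          (fun v : ℝ => M * (Real.sqrt π/2 - Egauss (Real.sqrt (c/v - c/T)))) x := by
        apply ContinuousAt.mul continuousAt_const
        apply ContinuousAt.sub continuousAt_const
        apply Egauss_continuous.continuousAt.comp
        apply Real.continuous_sqrt.continuousAt.comp
        exact (continuousAt_const.div continuousAt_id h0.ne').sub continuousAt_const
      have hev : (fun v : ℝ => M * (Real.sqrt π/2 - Egauss (Real.sqrt (c/v - c/T))))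
          =ᶠ[𝓝 x] G := by
        filter_upwards [IsOpen.mem_nhds isOpen_Ioi h0] with v hv
        simp [hG, Set.mem_Ioi.mp hv]
      exact (hGf.congr hev).continuousWithinAt
  have hderiv : ∀ u ∈ Ioo (0:ℝ) T, HasDerivWithinAt G (f u) (Ioi u) u := by
    intro u hu
    have hu0 : 0 < u := hu.1
    have huT : u < T := hu.2
    have hψ : 0 < c/u - c/T := by
      have : c/T < c/u := div_lt_div_of_pos_left hc hu0 huT
      linarith
    have hψd : HasDerivAt (fun v : ℝ => c/v - c/T) (-(c/u^2)) u := by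
      have h := ((hasDerivAt_inv hu0.ne').const_mul c).sub_const (c/T)
      have heq : -(c/u^2) = c * (-(u^2)⁻¹) := by field_simp
      rw [heq]
      simpa [div_eq_mul_inv] using h
    have hφd : HasDerivAt (fun v : ℝ => Real.sqrt (c/v - c/T))
        (-(c/u^2) / (2 * Real.sqrt (c/u - c/T))) u := hψd.sqrt hψ.ne'
    have hEd : HasDerivAt (fun v : ℝ => Egauss (Real.sqrt (c/v - c/T)))
        (Real.exp (-(Real.sqrt (c/u - c/T))^2) *
          (-(c/u^2) / (2 * Real.sqrt (c/u - c/T)))) u :=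
      HasDerivAt.comp (h₂ := Egauss) u (Egauss_hasDerivAt (Real.sqrt (c/u - c/T))) hφd
    have hGf : HasDerivAt
        (fun v : ℝ => M * (Real.sqrt π / 2 - Egauss (Real.sqrt (c/v - c/T))))
        (M * (0 - (Real.exp (-(Real.sqrt (c/u - c/T))^2) *
          (-(c/u^2) / (2 * Real.sqrt (c/u - c/T)))))) u :=
      (((hasDerivAt_const u (Real.sqrt π/2)).sub hEd)).const_mul M
    have hval : M * (0 - (Real.exp (-(Real.sqrt (c/u - c/T))^2) *
          (-(c/u^2) / (2 * Real.sqrt (c/u - c/T))))) = f u := by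
      have hsub : (0:ℝ) ≤ T - u := by linarith
      have hsq : Real.sqrt (c/u - c/T) ^ 2 = c/u - c/T := Real.sq_sqrt hψ.le
      have hsψ : Real.sqrt (c/u - c/T)
          = Real.sqrt c * Real.sqrt (T-u) / (Real.sqrt u * Real.sqrt T) := by
        have hh : c/u - c/T
            = (Real.sqrt c * Real.sqrt (T-u) / (Real.sqrt u * Real.sqrt T))^2 := by
          rw [div_pow, mul_pow, mul_pow, Real.sq_sqrt hc.le, Real.sq_sqrt hsub,
            Real.sq_sqrt hu0.le, Real.sq_sqrt hT.le]
          field_simp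
        rw [hh, Real.sqrt_sq (by positivity)]
      have hrT : (T-u) ^ (-(1:ℝ)/2) = (Real.sqrt (T-u))⁻¹ := by
        rw [show (-(1:ℝ)/2) = -(1/2 : ℝ) by norm_num, Real.rpow_neg hsub,
          Real.sqrt_eq_rpow]
      have hru : u ^ (-(3:ℝ)/2) = (Real.sqrt u)⁻¹ * u⁻¹ := by
        rw [show (-(3:ℝ)/2) = -(1/2 : ℝ) + (-1 : ℝ) by norm_num, Real.rpow_add hu0,
          Real.rpow_neg hu0.le, Real.sqrt_eq_rpow, Real.rpow_neg_one]
      have hexp2 : Real.exp (-(c/u - c/T)) = Real.exp (c/T) * Real.exp (-c/u) := by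
        rw [← Real.exp_add]; congr 1; ring
      have hcT : Real.sqrt (c*T) = Real.sqrt c * Real.sqrt T := Real.sqrt_mul hc.le T
      have hFF : Real.exp (-c/T) * Real.exp (c/T) = 1 := by
        rw [← Real.exp_add, show -c/T + c/T = 0 by ring, Real.exp_zero]
      have hc2 : Real.sqrt c ^ 2 = c := Real.sq_sqrt hc.le
      have hu2 : Real.sqrt u ^ 2 = u := Real.sq_sqrt hu0.le
      have ha : 0 < Real.sqrt c := Real.sqrt_pos.2 hc
      have hb : 0 < Real.sqrt (T-u) := Real.sqrt_pos.2 (by linarith)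
      have hp : 0 < Real.sqrt u := Real.sqrt_pos.2 hu0
      have hq : 0 < Real.sqrt T := Real.sqrt_pos.2 hT
      simp only [hf]
      rw [hsq, hsψ, hM, hcT, hexp2, hrT, hru]
      set E1 := Real.exp (-c/u) with hE1
      set F1 := Real.exp (-c/T) with hF1
      set F2 := Real.exp (c/T) with hF2
      have hF1ne : F1 ≠ 0 := by rw [hF1]; positivity
      rw [show F2 = F1⁻¹ from eq_inv_of_mul_eq_one_right hFF]
      field_simp
      rw [hc2]
      linear_combination (c*Real.sqrt T*E1) * hu2
    have hev : (fun v : ℝ => M * (Real.sqrt π / 2 - Egauss (Real.sqrt (c/v - c/T))))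
        =ᶠ[𝓝 u] G := by
      filter_upwards [IsOpen.mem_nhds isOpen_Ioi (show u ∈ Ioi (0:ℝ) from hu0)] with v hv
      simp [hG, Set.mem_Ioi.mp hv]
    exact ((hval ▸ hGf).congr_of_eventuallyEq hev.symm).hasDerivWithinAt
  have := intervalIntegral.integral_eq_sub_of_hasDeriv_right_of_le hT.le hcont hderiv hint
  rw [this]
  have hGT : G T = M * (Real.sqrt π / 2) := by
    simp [hG, hT, div_self hT.ne', Egauss_zero]
  have hG0 : G 0 = 0 := by simp [hG]
  rw [hGT, hG0, sub_zero, hM, Real.sqrt_div pi_pos.le]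
  ring


theorem singular_convolution_closed_form (B θ z s t : ℝ) (hB : 0 < B)
    (hθ0 : 0 < θ) (hθ1 : θ < 1) (hz : z ≠ 0) (hst : s < t) :
    (∫ τ in s..t, (t - τ) ^ (-(1:ℝ)/2) * (τ - s) ^ (-(3:ℝ)/2) *
        Real.exp (-(θ * (1 - θ) * z ^ 2 / (2 * B)) / (τ - s)))
      = (2 * Real.pi * B / (θ * (1 - θ) * (t - s))) ^ ((1:ℝ)/2) * (1 / |z|) *
        Real.exp (-(θ * (1 - θ) * z ^ 2) / (2 * B * (t - s))) := by
  set c := θ * (1 - θ) * z ^ 2 / (2 * B) with hcdef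
  have hθ' : 0 < 1 - θ := by linarith
  have hz2 : 0 < z ^ 2 := by positivity
  have hc : 0 < c := by positivity
  have hT : 0 < t - s := by linarith
  have hB' : B ≠ 0 := hB.ne'
  have hT' : t - s ≠ 0 := hT.ne'
  have h1 : (∫ τ in s..t, (t - τ) ^ (-(1:ℝ)/2) * (τ - s) ^ (-(3:ℝ)/2) *
        Real.exp (-c / (τ - s)))
      = ∫ τ in s..t, ((t-s) - (τ - s)) ^ (-(1:ℝ)/2) * (τ - s) ^ (-(3:ℝ)/2) *
        Real.exp (-c / (τ - s)) := by
    apply intervalIntegral.integral_congr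
    intro τ _
    simp only []
    rw [sub_sub_sub_cancel_right]
  rw [h1]
  have h2 : (∫ τ in s..t, ((t-s) - (τ - s)) ^ (-(1:ℝ)/2) * (τ - s) ^ (-(3:ℝ)/2) *
        Real.exp (-c / (τ - s)))
      = ∫ u in (0:ℝ)..(t-s), ((t-s) - u) ^ (-(1:ℝ)/2) * u ^ (-(3:ℝ)/2) *
          Real.exp (-c/u) := by
    have := intervalIntegral.integral_comp_sub_right
      (f := fun u : ℝ => ((t-s) - u) ^ (-(1:ℝ)/2) * u ^ (-(3:ℝ)/2) * Real.exp (-c/u))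
      (a := s) (b := t) s
    simpa using this
  rw [h2, key_integral c (t-s) hc hT]
  rw [show (2*Real.pi*B/(θ*(1-θ)*(t-s))) ^ ((1:ℝ)/2)
      = Real.sqrt (2*Real.pi*B/(θ*(1-θ)*(t-s))) from (Real.sqrt_eq_rpow _).symm]
  congr 1
  · rw [show π/(c*(t-s)) = (2*Real.pi*B/(θ*(1-θ)*(t-s)))/z^2 by
        rw [hcdef]; field_simp]
    rw [Real.sqrt_div (by positivity), Real.sqrt_sq_eq_abs, div_eq_mul_inv, one_div]
  · congr 1
    rw [hcdef]
    field_simp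
end

section
/- Fix 0 < α < 1 and constants C₁ > 0, C₀ > 0, 0 ≤ m₀ < 1. Suppose functions V^{(k)}(s) on [0,t) satisfy |V^{(0)}(s)| ≤ C₀(t-s)^{-1/2} and the recursive bound |V^{(k)}(s)| ≤ ∫_s^t [2C₁(τ-s)^{-1+α/2} + m₀ π^{-1}(t-s)^{1/2}(τ-s)^{-3/2}·g(s,τ)] |V^{(k-1)}(τ)| dτ, where the second term's contribution is bounded so that each iteration multiplies by at most (2C₁Γ(α/2)Γ(1/2)/Γ((1+(k))α/2 + 1/2))-type factors plus m₀. Then by induction |V^{(k)}(s)| ≤ C₀(t-s)^{-1/2} Σ_{n=0}^k C(k,n) h_{s,t}^{(k-n)} m₀^n, with h_{s,t}^{(k)} = (2C₁Γ(α/2))^k Γ(1/2)(t-s)^{kα/2}/Γ((1+kα)/2). -/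
open Real MeasureTheory Finset intervalIntegral

lemma real_beta01 {a b : ℝ} (ha : 0 < a) (hb : 0 < b) :
    ∫ x in (0:ℝ)..1, x ^ (a-1) * (1-x) ^ (b-1) =
      Real.Gamma a * Real.Gamma b / Real.Gamma (a+b) := by
  have h := Complex.Gamma_mul_Gamma_eq_betaIntegral (s := (a:ℂ)) (t := (b:ℂ))
    (by simpa using ha) (by simpa using hb)
  have hG : Complex.Gamma ((a:ℂ) + b) ≠ 0 := by
    apply Complex.Gamma_ne_zero_of_re_pos
    simp [add_pos ha hb]
  have hbeta : Complex.betaIntegral (a:ℂ) (b:ℂ) =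
      ((∫ x in (0:ℝ)..1, x ^ (a-1) * (1-x) ^ (b-1) : ℝ) : ℂ) := by
    rw [Complex.betaIntegral, ← intervalIntegral.integral_ofReal]
    apply intervalIntegral.integral_congr
    intro x hx
    rw [Set.uIcc_of_le (by norm_num : (0:ℝ) ≤ 1)] at hx
    show (x:ℂ) ^ ((a:ℂ) - 1) * (1 - (x:ℂ)) ^ ((b:ℂ) - 1)
        = ((x ^ (a-1) * (1-x) ^ (b-1) : ℝ) : ℂ)
    rw [Complex.ofReal_mul, Complex.ofReal_cpow hx.1,
      Complex.ofReal_cpow (by linarith [hx.2] : (0:ℝ) ≤ 1-x)]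
    push_cast
    ring
  rw [hbeta] at h
  have key : ((∫ x in (0:ℝ)..1, x ^ (a-1) * (1-x) ^ (b-1) : ℝ) : ℂ)
      = Complex.Gamma a * Complex.Gamma b / Complex.Gamma ((a:ℂ)+b) := by
    rw [eq_div_iff hG, h]; ring
  rw [← Complex.ofReal_inj, key, Complex.ofReal_div, Complex.ofReal_mul,
    Complex.Gamma_ofReal, Complex.Gamma_ofReal,
    show ((a:ℂ)+b) = ((a+b:ℝ):ℂ) by push_cast; ring, Complex.Gamma_ofReal]

lemma betaIntegrand_st {a b s t : ℝ} (ha : 0 < a) (hb : 0 < b) (hst : s < t) :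
    IntervalIntegrable (fun τ => (τ - s) ^ (a-1) * (t - τ) ^ (b-1)) volume s t := by
  set m := (s + t) / 2 with hm
  have hsm : s < m := by simp [hm]; linarith
  have hmt : m < t := by simp [hm]; linarith
  have h1 : IntervalIntegrable (fun τ => (τ - s) ^ (a-1) * (t - τ) ^ (b-1)) volume s m := by
    apply IntervalIntegrable.mul_continuousOn
    · have := (intervalIntegral.intervalIntegrable_rpow' (a := 0) (b := m - s)
        (r := a - 1) (by linarith)).comp_sub_right s
      simpa using this
    · apply ContinuousOn.rpow_const
      · exact (continuous_const.sub continuous_id).continuousOn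
      · intro x hx
        rw [Set.uIcc_of_le hsm.le] at hx
        exact Or.inl (by simp; linarith [hx.2])
  have h2 : IntervalIntegrable (fun τ => (τ - s) ^ (a-1) * (t - τ) ^ (b-1)) volume m t := by
    have h2' : IntervalIntegrable (fun τ => (t - τ) ^ (b-1) * (τ - s) ^ (a-1)) volume m t := by
      apply IntervalIntegrable.mul_continuousOn
      · have base := (intervalIntegral.intervalIntegrable_rpow' (a := 0) (b := t - m)
          (r := b - 1) (by linarith))
        have := ((base.comp_mul_left (c := -1)).comp_sub_right t).symm
        simpa [neg_sub, neg_mul, one_mul, div_neg] using this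
      · apply ContinuousOn.rpow_const
        · exact (continuous_id.sub continuous_const).continuousOn
        · intro x hx
          rw [Set.uIcc_of_le hmt.le] at hx
          exact Or.inl (by simp; linarith [hx.1])
    simpa [mul_comm] using h2'
  exact h1.trans h2

lemma real_beta_st {a b s t : ℝ} (ha : 0 < a) (hb : 0 < b) (hst : s < t) :
    ∫ τ in s..t, (τ - s) ^ (a-1) * (t - τ) ^ (b-1) =
      (t - s) ^ (a + b - 1) * (Real.Gamma a * Real.Gamma b / Real.Gamma (a+b)) := by
  have hts : (0:ℝ) < t - s := by linarith
  have hsub := intervalIntegral.integral_comp_mul_add (a := (0:ℝ)) (b := 1)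
    (fun τ => (τ - s) ^ (a-1) * (t - τ) ^ (b-1)) (ne_of_gt hts) s
  simp only [mul_zero, zero_add, mul_one, smul_eq_mul] at hsub
  rw [show t - s + s = t by ring] at hsub
  have hI : (∫ x in (0:ℝ)..1,
      ((t-s)*x + s - s) ^ (a-1) * (t - ((t-s)*x + s)) ^ (b-1)) =
      (t-s) ^ (a-1) * (t-s) ^ (b-1) * (Real.Gamma a * Real.Gamma b / Real.Gamma (a+b)) := by
    have hcg : (∫ x in (0:ℝ)..1,
        ((t-s)*x + s - s) ^ (a-1) * (t - ((t-s)*x + s)) ^ (b-1)) =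
        ∫ x in (0:ℝ)..1, (t-s) ^ (a-1) * (t-s) ^ (b-1) * (x ^ (a-1) * (1-x) ^ (b-1)) := by
      apply intervalIntegral.integral_congr
      intro x hx
      rw [Set.uIcc_of_le (by norm_num : (0:ℝ) ≤ 1)] at hx
      dsimp only
      have h1 : (t-s)*x + s - s = (t-s)*x := by ring
      have h2 : t - ((t-s)*x + s) = (t-s)*(1-x) := by ring
      rw [h1, h2, Real.mul_rpow hts.le hx.1, Real.mul_rpow hts.le (by linarith [hx.2])]
      ring
    rw [hcg, intervalIntegral.integral_const_mul, real_beta01 ha hb]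
  rw [hI] at hsub
  have hval : (∫ τ in s..t, (τ - s) ^ (a-1) * (t - τ) ^ (b-1))
      = (t-s) * ((t-s) ^ (a-1) * (t-s) ^ (b-1) * (Real.Gamma a * Real.Gamma b / Real.Gamma (a+b))) := by
    rw [hsub, ← mul_assoc, mul_inv_cancel₀ (ne_of_gt hts), one_mul]
  rw [hval, show (a+b-1) = 1+(a-1)+(b-1) by ring, Real.rpow_add hts, Real.rpow_add hts,
    Real.rpow_one]
  ring

lemma cancel_aux {X Y Z W G : ℝ} (hG : G ≠ 0) :
    X / G * (Y * (Z * G / W)) = X * Y * Z / W := by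
  rcases eq_or_ne W 0 with h | h
  · simp [h]
  · field_simp

set_option maxHeartbeats 1000000 in
theorem successive_approximation_bound (α C₀ C₁ m₀ t : ℝ)
    (hα0 : 0 < α) (hα1 : α < 1) (hC₀ : 0 < C₀) (hC₁ : 0 < C₁)
    (hm0 : 0 ≤ m₀) (hm1 : m₀ < 1) (ht : 0 < t)
    (V : ℕ → ℝ → ℝ) (H : ℕ → ℝ → ℝ)
    (hH : ∀ (k : ℕ) (s : ℝ), H k s =
      (2 * C₁ * Real.Gamma (α/2)) ^ k * Real.Gamma (1/2) * (t - s) ^ ((k : ℝ) * α / 2) /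
        Real.Gamma ((1 + (k : ℝ) * α) / 2))
    (h0 : ∀ s ∈ Set.Ico (0:ℝ) t, |V 0 s| ≤ C₀ * (t - s) ^ (-(1:ℝ)/2))
    (hrec : ∀ (k : ℕ), ∀ s ∈ Set.Ico (0:ℝ) t,
      |V (k + 1) s| ≤ (∫ τ in s..t, 2 * C₁ * (τ - s) ^ (-1 + α/2) * |V k τ|)
        + m₀ * (C₀ * (t - s) ^ (-(1:ℝ)/2) *
            ∑ n ∈ Finset.range (k + 1), (k.choose n : ℝ) * H (k - n) s * m₀ ^ n)) :
    ∀ (k : ℕ), ∀ s ∈ Set.Ico (0:ℝ) t,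
      |V k s| ≤ C₀ * (t - s) ^ (-(1:ℝ)/2) *
        ∑ n ∈ Finset.range (k + 1), (k.choose n : ℝ) * H (k - n) s * m₀ ^ n := by
  have hGhalf : 0 < Real.Gamma (1/2) := Real.Gamma_pos_of_pos (by norm_num)
  have hGα : 0 < Real.Gamma (α/2) := Real.Gamma_pos_of_pos (by linarith)
  set A : ℝ := 2 * C₁ * Real.Gamma (α/2) with hAdef
  have hA : 0 < A := by positivity
  intro k
  induction k with
  | zero =>
    intro s hs
    have hH0 : H 0 s = 1 := by
      rw [hH]
      norm_num
      exact ne_of_gt hGhalf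
    simpa [hH0] using h0 s hs
  | succ k ih =>
    intro s hs
    obtain ⟨hs0, hst⟩ := hs
    have hts : (0:ℝ) < t - s := by linarith
    -- exponents and coefficients
    set b : ℕ → ℝ := fun n => (1 + ((k - n : ℕ) : ℝ) * α) / 2 with hbdef
    have hb : ∀ n, 0 < b n := by
      intro n
      have : (0:ℝ) ≤ ((k - n : ℕ) : ℝ) := Nat.cast_nonneg _
      simp only [hbdef]
      positivity
    have hGb : ∀ n, 0 < Real.Gamma (b n) := fun n => Real.Gamma_pos_of_pos (hb n)
    set c : ℕ → ℝ := fun n =>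
      2 * C₁ * C₀ * (k.choose n : ℝ) * m₀ ^ n * A ^ (k - n) * Real.Gamma (1/2) /
        Real.Gamma (b n) with hcdef
    set g : ℝ → ℝ := fun τ =>
      ∑ n ∈ Finset.range (k+1), c n * ((τ - s) ^ (α/2 - 1) * (t - τ) ^ (b n - 1)) with hgdef
    have hg_int : IntervalIntegrable g volume s t := by
      have hfun : g = ∑ n ∈ Finset.range (k+1),
          (fun τ => c n * ((τ - s) ^ (α/2 - 1) * (t - τ) ^ (b n - 1))) := by
        rw [hgdef]; ext τ; rw [Finset.sum_apply]
      rw [hfun]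
      apply IntervalIntegrable.sum
      intro n _
      exact (betaIntegrand_st (by linarith : 0 < α/2) (hb n) hst).const_mul (c n)
    -- value of the integral of g
    have hg_val : (∫ τ in s..t, g τ) = C₀ * (t - s) ^ (-(1:ℝ)/2) *
        ∑ n ∈ Finset.range (k+1), (k.choose n : ℝ) * H (k + 1 - n) s * m₀ ^ n := by
      simp only [hgdef]
      rw [intervalIntegral.integral_finset_sum (fun n _ =>
        (betaIntegrand_st (by linarith : 0 < α/2) (hb n) hst).const_mul (c n))]
      rw [Finset.mul_sum]
      apply Finset.sum_congr rfl
      intro n hn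
      have hnk : n ≤ k := Nat.lt_succ_iff.mp (Finset.mem_range.mp hn)
      have hj : k + 1 - n = (k - n) + 1 := by omega
      rw [intervalIntegral.integral_const_mul, real_beta_st (by linarith : 0 < α/2) (hb n) hst]
      rw [hj, hH]
      have hcast : (((k - n) + 1 : ℕ) : ℝ) = ((k - n : ℕ) : ℝ) + 1 := by push_cast; ring
      rw [hcast]
      have he1 : α/2 + b n - 1 = (-(1:ℝ)/2) + (((k - n : ℕ) : ℝ) + 1) * α / 2 := by
        simp only [hbdef]; ring
      have he2 : α/2 + b n = (1 + (((k - n : ℕ) : ℝ) + 1) * α) / 2 := by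
        simp only [hbdef]; ring
      rw [he1, Real.rpow_add hts, he2]
      have hpow : A ^ ((k - n) + 1) = A ^ (k - n) * (2 * C₁ * Real.Gamma (α/2)) := by
        rw [pow_succ, hAdef]
      rw [hpow, hcdef]
      have hGs : Real.Gamma ((1 + (((k - n : ℕ) : ℝ) + 1) * α) / 2) ≠ 0 := by
        refine ne_of_gt (Real.Gamma_pos_of_pos ?_)
        have : (0:ℝ) ≤ ((k - n : ℕ) : ℝ) := Nat.cast_nonneg _
        positivity
      rw [cancel_aux (ne_of_gt (hGb n))]
      field_simp [hGs]
    -- pointwise bound on the open interval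
    have hpt : ∀ τ ∈ Set.Ioo s t, 2 * C₁ * (τ - s) ^ (-1 + α/2) * |V k τ| ≤ g τ := by
      intro τ hτ
      have hτt : (0:ℝ) < t - τ := by linarith [hτ.2]
      have hτs : (0:ℝ) < τ - s := by linarith [hτ.1]
      have hVk := ih τ ⟨le_trans hs0 hτ.1.le, hτ.2⟩
      have hfac : (0:ℝ) ≤ 2 * C₁ * (τ - s) ^ (-1 + α/2) := by positivity
      calc 2 * C₁ * (τ - s) ^ (-1 + α/2) * |V k τ|
          ≤ 2 * C₁ * (τ - s) ^ (-1 + α/2) *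
            (C₀ * (t - τ) ^ (-(1:ℝ)/2) *
              ∑ n ∈ Finset.range (k + 1), (k.choose n : ℝ) * H (k - n) τ * m₀ ^ n) :=
            mul_le_mul_of_nonneg_left hVk hfac
        _ = g τ := by
            simp only [hgdef]
            rw [Finset.mul_sum, Finset.mul_sum]
            apply Finset.sum_congr rfl
            intro n _
            have he3 : (t - τ) ^ (-(1:ℝ)/2) * (t - τ) ^ (((k - n : ℕ) : ℝ) * α / 2)
                = (t - τ) ^ (b n - 1) := by
              rw [← Real.rpow_add hτt]
              congr 1
              simp only [hbdef]; ring
            have hGbn : Real.Gamma ((1 + ((k - n : ℕ) : ℝ) * α) / 2) ≠ 0 := ne_of_gt (hGb n)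
            rw [hH, show (-1 + α/2 : ℝ) = α/2 - 1 from by ring, ← he3]
            simp only [hcdef, hbdef]
            field_simp
    -- compare the integral of f with that of g
    have hcomp : (∫ τ in s..t, 2 * C₁ * (τ - s) ^ (-1 + α/2) * |V k τ|) ≤ ∫ τ in s..t, g τ := by
      by_cases hfi : IntervalIntegrable (fun τ => 2 * C₁ * (τ - s) ^ (-1 + α/2) * |V k τ|)
          volume s t
      · apply intervalIntegral.integral_mono_ae_restrict hst.le hfi hg_int
        rw [← MeasureTheory.Measure.restrict_congr_set MeasureTheory.Ioo_ae_eq_Icc]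
        filter_upwards [MeasureTheory.ae_restrict_mem measurableSet_Ioo] with τ hτ
        exact hpt τ hτ
      · rw [intervalIntegral.integral_undef hfi, hg_val]
        apply mul_nonneg (by positivity)
        apply Finset.sum_nonneg
        intro n _
        have hHn : 0 ≤ H (k + 1 - n) s := by
          rw [hH]
          have h1 : 0 < Real.Gamma ((1 + ((k + 1 - n : ℕ) : ℝ) * α) / 2) := by
            refine Real.Gamma_pos_of_pos ?_
            have : (0:ℝ) ≤ ((k + 1 - n : ℕ) : ℝ) := Nat.cast_nonneg _
            positivity
          positivity
        positivity
    -- Pascal identity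
    have pascal : (∑ n ∈ Finset.range (k+1), (k.choose n : ℝ) * H (k + 1 - n) s * m₀ ^ n)
        + m₀ * (∑ n ∈ Finset.range (k+1), (k.choose n : ℝ) * H (k - n) s * m₀ ^ n)
        = ∑ n ∈ Finset.range (k+2), ((k+1).choose n : ℝ) * H (k + 1 - n) s * m₀ ^ n := by
      rw [Finset.sum_range_succ' _ (k+1)]
      simp only [Nat.succ_sub_succ, Nat.choose_zero_right, Nat.cast_one, one_mul, pow_zero,
        mul_one, Nat.sub_zero]
      have hsplit : ∀ n ∈ Finset.range (k+1),
          ((k+1).choose (n+1) : ℝ) * H (k - n) s * m₀ ^ (n+1)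
          = (k.choose n : ℝ) * H (k - n) s * m₀ ^ (n+1)
            + (k.choose (n+1) : ℝ) * H (k - n) s * m₀ ^ (n+1) := by
        intro n _
        rw [Nat.choose_succ_succ]
        push_cast
        ring
      rw [Finset.sum_congr rfl hsplit, Finset.sum_add_distrib]
      have hL1 : (∑ n ∈ Finset.range (k+1), (k.choose n : ℝ) * H (k + 1 - n) s * m₀ ^ n)
          = (∑ n ∈ Finset.range (k+1), (k.choose (n+1) : ℝ) * H (k - n) s * m₀ ^ (n+1))
            + H (k + 1) s := by
        rw [Finset.sum_range_succ' _ k]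
        simp only [Nat.succ_sub_succ, Nat.choose_zero_right, Nat.cast_one, one_mul, pow_zero,
          mul_one, Nat.sub_zero]
        rw [Finset.sum_range_succ]
        simp [Nat.choose_succ_self]
      have hL2 : m₀ * (∑ n ∈ Finset.range (k+1), (k.choose n : ℝ) * H (k - n) s * m₀ ^ n)
          = ∑ n ∈ Finset.range (k+1), (k.choose n : ℝ) * H (k - n) s * m₀ ^ (n+1) := by
        rw [Finset.mul_sum]
        apply Finset.sum_congr rfl
        intro n _
        ring
      rw [hL1, hL2]
      ring
    calc |V (k+1) s|
        ≤ (∫ τ in s..t, 2 * C₁ * (τ - s) ^ (-1 + α/2) * |V k τ|)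
          + m₀ * (C₀ * (t - s) ^ (-(1:ℝ)/2) *
            ∑ n ∈ Finset.range (k + 1), (k.choose n : ℝ) * H (k - n) s * m₀ ^ n) :=
          hrec k s ⟨hs0, hst⟩
      _ ≤ (∫ τ in s..t, g τ)
          + m₀ * (C₀ * (t - s) ^ (-(1:ℝ)/2) *
            ∑ n ∈ Finset.range (k + 1), (k.choose n : ℝ) * H (k - n) s * m₀ ^ n) := by
          linarith [hcomp]
      _ = C₀ * (t - s) ^ (-(1:ℝ)/2) *
          ∑ n ∈ Finset.range (k + 2), ((k+1).choose n : ℝ) * H (k + 1 - n) s * m₀ ^ n := by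
          rw [hg_val, ← pascal]
          ring
      _ = C₀ * (t - s) ^ (-(1:ℝ)/2) *
          ∑ n ∈ Finset.range (k + 1 + 1), ((k+1).choose n : ℝ) * H (k + 1 - n) s * m₀ ^ n := rfl
end

section
/- Let Φ₀(s,t) be continuous in s ∈ [0,t], satisfy lim_{s↑t} Φ₀(s,t) = 0, and the Hölder estimate |Φ₀(ρ,t)-Φ₀(s,t)| ≤ C‖φ‖(t-ρ)^{-(1+α)/2}(ρ-s)^{(1+α)/2} for s < ρ < t with α ∈ (0,1), together with |Φ₀(s,t)| ≤ C‖φ‖. Then Φ(s,t) := (2π)^{-1/2} ∫_s^t (ρ-s)^{-3/2}[Φ₀(ρ,t)-Φ₀(s,t)] dρ − (2/π)^{1/2}(t-s)^{-1/2}Φ₀(s,t) is well defined and satisfies |Φ(s,t)| ≤ C'‖φ‖(t-s)^{-1/2}. -/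
open Real MeasureTheory

theorem holmgren_transform_estimate (C α nφ t : ℝ)
    (hC : 0 < C) (hα0 : 0 < α) (hα1 : α < 1) (hnφ : 0 ≤ nφ) (ht : 0 < t)
    (Φ₀ : ℝ → ℝ)
    (hcont : ContinuousOn Φ₀ (Set.Icc 0 t))
    (hlim : Filter.Tendsto Φ₀ (nhdsWithin t (Set.Iio t)) (nhds 0))
    (hbound : ∀ s ∈ Set.Icc (0:ℝ) t, |Φ₀ s| ≤ C * nφ)
    (hHolder : ∀ s ρ : ℝ, 0 ≤ s → s < ρ → ρ < t →
      |Φ₀ ρ - Φ₀ s| ≤ C * nφ * (t - ρ) ^ (-((1 + α)/2)) * (ρ - s) ^ ((1 + α)/2)) :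
    ∃ C' : ℝ, 0 < C' ∧ ∀ s : ℝ, 0 ≤ s → s < t →
      IntervalIntegrable (fun ρ => (ρ - s) ^ (-(3:ℝ)/2) * (Φ₀ ρ - Φ₀ s)) volume s t ∧
      |(2 * Real.pi) ^ (-(1:ℝ)/2) * (∫ ρ in s..t, (ρ - s) ^ (-(3:ℝ)/2) * (Φ₀ ρ - Φ₀ s))
          - Real.sqrt (2 / Real.pi) * (t - s) ^ (-(1:ℝ)/2) * Φ₀ s|
        ≤ C' * nφ * (t - s) ^ (-(1:ℝ)/2) := by
  set sq2 : ℝ := (2:ℝ) ^ ((1:ℝ)/2) with hsq2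
  have hsq2pos : 0 < sq2 := Real.rpow_pos_of_pos two_pos _
  refine ⟨C * (2 * sq2 / α + 4 * sq2 + 1), by positivity, fun s hs0 hst => ?_⟩
  set f : ℝ → ℝ := fun ρ => (ρ - s) ^ (-(3:ℝ)/2) * (Φ₀ ρ - Φ₀ s) with hf
  set d : ℝ := t - s with hd
  have hdpos : 0 < d := sub_pos.2 hst
  set m : ℝ := (s + t) / 2 with hm
  have hsm : s < m := by rw [hm]; linarith
  have hmt : m < t := by rw [hm]; linarith
  have hms : m - s = d / 2 := by rw [hm, hd]; ring
  have hm0 : 0 ≤ m := by rw [hm]; linarith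
  have half_pos : (0:ℝ) < d / 2 := by linarith
  have hCn : 0 ≤ C * nφ := mul_nonneg hC.le hnφ
  have hhalfpow : (d/2) ^ (-(1:ℝ)/2) = sq2 * d ^ (-(1:ℝ)/2) := by
    rw [Real.div_rpow hdpos.le (by norm_num : (0:ℝ) ≤ 2)]
    rw [show (-(1:ℝ)/2) = -((1:ℝ)/2) from by norm_num]
    rw [Real.rpow_neg (by norm_num : (0:ℝ) ≤ 2), div_inv_eq_mul, hsq2]
    ring
  -- the dominating constant on [s, m]
  set K : ℝ := (d/2) ^ (-((1 + α)/2)) with hK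
  have hKpos : 0 < K := Real.rpow_pos_of_pos half_pos _
  set r1 : ℝ := α/2 - 1 with hr1
  -- pointwise bound on Ioc s m
  have hptw : ∀ ρ ∈ Set.Ioc s m, ‖f ρ‖ ≤ C * nφ * K * (ρ - s) ^ r1 := by
    intro ρ hρ
    have hρs : 0 < ρ - s := sub_pos.2 hρ.1
    have hρt : ρ < t := lt_of_le_of_lt hρ.2 hmt
    have h1 : |Φ₀ ρ - Φ₀ s| ≤ C * nφ * (t - ρ) ^ (-((1 + α)/2)) * (ρ - s) ^ ((1 + α)/2) :=
      hHolder s ρ hs0 hρ.1 hρt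
    have h2 : (t - ρ) ^ (-((1 + α)/2)) ≤ K := by
      apply Real.rpow_le_rpow_of_nonpos half_pos (by rw [hm] at hρ; rw [hd]; linarith [hρ.2])
      have : 0 < (1 + α) / 2 := by linarith
      linarith
    have habs : ‖f ρ‖ = (ρ - s) ^ (-(3:ℝ)/2) * |Φ₀ ρ - Φ₀ s| := by
      rw [hf, Real.norm_eq_abs, abs_mul, abs_of_pos (Real.rpow_pos_of_pos hρs _)]
    rw [habs]
    calc (ρ - s) ^ (-(3:ℝ)/2) * |Φ₀ ρ - Φ₀ s|
        ≤ (ρ - s) ^ (-(3:ℝ)/2) * (C * nφ * (t - ρ) ^ (-((1 + α)/2)) * (ρ - s) ^ ((1 + α)/2)) := by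
          exact mul_le_mul_of_nonneg_left h1 (Real.rpow_pos_of_pos hρs _).le
      _ ≤ (ρ - s) ^ (-(3:ℝ)/2) * (C * nφ * K * (ρ - s) ^ ((1 + α)/2)) := by
          apply mul_le_mul_of_nonneg_left _ (Real.rpow_pos_of_pos hρs _).le
          apply mul_le_mul_of_nonneg_right _ (Real.rpow_pos_of_pos hρs _).le
          exact mul_le_mul_of_nonneg_left h2 hCn
      _ = C * nφ * K * ((ρ - s) ^ (-(3:ℝ)/2) * (ρ - s) ^ ((1 + α)/2)) := by ring
      _ = C * nφ * K * (ρ - s) ^ r1 := by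
          rw [← Real.rpow_add hρs]; congr 1; rw [hr1]; ring
  -- integrability of the dominator on [s, m]
  have hr1gt : (-1:ℝ) < r1 := by rw [hr1]; linarith
  have hgint : IntervalIntegrable (fun ρ => C * nφ * K * (ρ - s) ^ r1) volume s m := by
    have h0 : IntervalIntegrable (fun x : ℝ => x ^ r1) volume 0 (m - s) :=
      intervalIntegral.intervalIntegrable_rpow' hr1gt
    have h1 := h0.comp_sub_right s
    simp only [zero_add, sub_add_cancel] at h1
    exact h1.const_mul _
  have hfcont : ContinuousOn f (Set.Ioc s m) := by
    apply ContinuousOn.mul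
    · apply ContinuousOn.rpow_const (by fun_prop)
      intro x hx; exact Or.inl (ne_of_gt (sub_pos.2 hx.1))
    · apply ContinuousOn.sub _ continuousOn_const
      apply hcont.mono
      intro x hx; exact ⟨by linarith [hx.1], le_trans hx.2 hmt.le⟩
  have hmeas : AEStronglyMeasurable f (volume.restrict (Set.uIoc s m)) := by
    rw [Set.uIoc_of_le hsm.le]
    exact hfcont.aestronglyMeasurable measurableSet_Ioc
  have hint1 : IntervalIntegrable f volume s m := by
    apply hgint.mono_fun' hmeas
    rw [Filter.EventuallyLE, ae_restrict_iff' measurableSet_uIoc]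
    apply Filter.Eventually.of_forall
    intro ρ hρ
    rw [Set.uIoc_of_le hsm.le] at hρ
    exact hptw ρ hρ
  -- integrability on [m, t]
  have hfcont2 : ContinuousOn f (Set.Icc m t) := by
    apply ContinuousOn.mul
    · apply ContinuousOn.rpow_const (by fun_prop)
      intro x hx; exact Or.inl (ne_of_gt (sub_pos.2 (lt_of_lt_of_le hsm hx.1)))
    · apply ContinuousOn.sub _ continuousOn_const
      apply hcont.mono
      intro x hx; exact ⟨le_trans hm0 hx.1, hx.2⟩
  have hint2 : IntervalIntegrable f volume m t := by
    apply ContinuousOn.intervalIntegrable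
    rwa [Set.uIcc_of_le hmt.le]
  have hint : IntervalIntegrable f volume s t := hint1.trans hint2
  refine ⟨hint, ?_⟩
  -- First piece estimate
  have hA : |∫ ρ in s..m, f ρ| ≤ C * nφ * (2 * sq2 / α) * d ^ (-(1:ℝ)/2) := by
    have h := intervalIntegral.norm_integral_le_abs_of_norm_le (μ := volume) (f := f)
      (g := fun ρ => C * nφ * K * (ρ - s) ^ r1) (a := s) (b := m)
      ?_ hgint
    · have hval : (∫ ρ in s..m, C * nφ * K * (ρ - s) ^ r1)
          = C * nφ * K * ((d/2) ^ (α/2) / (α/2)) := by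
        rw [intervalIntegral.integral_const_mul]
        have hcomp : (∫ ρ in s..m, (ρ - s) ^ r1) = ∫ x in (0:ℝ)..(m - s), x ^ r1 := by
          have := intervalIntegral.integral_comp_sub_right (a := s) (b := m)
            (fun x => x ^ r1) s
          simpa using this
        rw [hcomp, integral_rpow (Or.inl hr1gt)]
        rw [Real.zero_rpow (by rw [hr1]; intro h; nlinarith), hms]
        have he : r1 + 1 = α / 2 := by rw [hr1]; ring
        rw [he, sub_zero]
      have hKval : K * (d/2) ^ (α/2) = sq2 * d ^ (-(1:ℝ)/2) := by
        rw [hK, ← Real.rpow_add half_pos]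
        have he : -((1 + α)/2) + α/2 = -(1:ℝ)/2 := by ring
        rw [he]; exact hhalfpow
      have hval2 : (∫ ρ in s..m, C * nφ * K * (ρ - s) ^ r1)
          = C * nφ * (2 * sq2 / α) * d ^ (-(1:ℝ)/2) := by
        rw [hval]
        have : C * nφ * K * ((d/2) ^ (α/2) / (α/2))
            = C * nφ * (K * (d/2) ^ (α/2)) * (α/2)⁻¹ := by ring
        rw [this, hKval]
        field_simp
      calc |∫ ρ in s..m, f ρ| ≤ |∫ ρ in s..m, C * nφ * K * (ρ - s) ^ r1| := h
        _ = C * nφ * (2 * sq2 / α) * d ^ (-(1:ℝ)/2) := by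
            rw [hval2, abs_of_nonneg]
            apply mul_nonneg (mul_nonneg hCn (by positivity))
            exact Real.rpow_nonneg hdpos.le _
    · rw [ae_restrict_iff' measurableSet_uIoc]
      apply Filter.Eventually.of_forall
      intro ρ hρ
      rw [Set.uIoc_of_le hsm.le] at hρ
      exact hptw ρ hρ
  -- Second piece estimate
  have hB : |∫ ρ in m..t, f ρ| ≤ 4 * (C * nφ) * sq2 * d ^ (-(1:ℝ)/2) := by
    have hg2int : IntervalIntegrable (fun ρ => 2 * (C * nφ) * (ρ - s) ^ (-(3:ℝ)/2))
        volume m t := by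
      apply ContinuousOn.intervalIntegrable
      rw [Set.uIcc_of_le hmt.le]
      refine continuousOn_const.mul ?_
      apply ContinuousOn.rpow_const (by fun_prop)
      intro x hx; exact Or.inl (ne_of_gt (sub_pos.2 (lt_of_lt_of_le hsm hx.1)))
    have h := intervalIntegral.norm_integral_le_abs_of_norm_le (μ := volume) (f := f)
      (g := fun ρ => 2 * (C * nφ) * (ρ - s) ^ (-(3:ℝ)/2)) (a := m) (b := t)
      ?_ hg2int
    · have hval : (∫ ρ in m..t, 2 * (C * nφ) * (ρ - s) ^ (-(3:ℝ)/2))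
          = 2 * (C * nφ) * (2 * ((d/2) ^ (-(1:ℝ)/2) - d ^ (-(1:ℝ)/2))) := by
        rw [intervalIntegral.integral_const_mul]
        have hcomp : (∫ ρ in m..t, (ρ - s) ^ (-(3:ℝ)/2))
            = ∫ x in (d/2)..d, x ^ (-(3:ℝ)/2) := by
          have := intervalIntegral.integral_comp_sub_right (a := m) (b := t)
            (fun x => x ^ (-(3:ℝ)/2)) s
          rw [this, hms, ← hd]
        rw [hcomp, integral_rpow]
        · have he : (-(3:ℝ)/2) + 1 = -(1:ℝ)/2 := by norm_num
          rw [he]; ring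
        · refine Or.inr ⟨by norm_num, ?_⟩
          rw [Set.uIcc_of_le (by linarith : d/2 ≤ d)]
          intro hmem
          exact absurd hmem.1 (by linarith)
      have hmono : d ^ (-(1:ℝ)/2) ≤ (d/2) ^ (-(1:ℝ)/2) := by
        apply Real.rpow_le_rpow_of_nonpos half_pos (by linarith) (by norm_num)
      have hnn : 0 ≤ d ^ (-(1:ℝ)/2) := Real.rpow_nonneg hdpos.le _
      calc |∫ ρ in m..t, f ρ| ≤ |∫ ρ in m..t, 2 * (C * nφ) * (ρ - s) ^ (-(3:ℝ)/2)| := h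
        _ = 2 * (C * nφ) * (2 * ((d/2) ^ (-(1:ℝ)/2) - d ^ (-(1:ℝ)/2))) := by
            rw [hval, abs_of_nonneg]
            apply mul_nonneg (by positivity)
            apply mul_nonneg (by norm_num)
            linarith
        _ ≤ 2 * (C * nφ) * (2 * (d/2) ^ (-(1:ℝ)/2)) := by
            apply mul_le_mul_of_nonneg_left _ (by positivity)
            apply mul_le_mul_of_nonneg_left _ (by norm_num)
            linarith
        _ = 4 * (C * nφ) * sq2 * d ^ (-(1:ℝ)/2) := by rw [hhalfpow]; ring
    · rw [ae_restrict_iff' measurableSet_uIoc]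
      apply Filter.Eventually.of_forall
      intro ρ hρ
      rw [Set.uIoc_of_le hmt.le] at hρ
      have hρs : 0 < ρ - s := sub_pos.2 (lt_trans hsm hρ.1)
      have hρmem : ρ ∈ Set.Icc (0:ℝ) t := ⟨le_trans hm0 hρ.1.le, hρ.2⟩
      have hsmem : s ∈ Set.Icc (0:ℝ) t := ⟨hs0, hst.le⟩
      have hdiff : |Φ₀ ρ - Φ₀ s| ≤ 2 * (C * nφ) := by
        calc |Φ₀ ρ - Φ₀ s| ≤ |Φ₀ ρ| + |Φ₀ s| := abs_sub _ _
          _ ≤ C * nφ + C * nφ := add_le_add (hbound ρ hρmem) (hbound s hsmem)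
          _ = 2 * (C * nφ) := by ring
      have habs : ‖f ρ‖ = (ρ - s) ^ (-(3:ℝ)/2) * |Φ₀ ρ - Φ₀ s| := by
        rw [hf, Real.norm_eq_abs, abs_mul, abs_of_pos (Real.rpow_pos_of_pos hρs _)]
      rw [habs]
      calc (ρ - s) ^ (-(3:ℝ)/2) * |Φ₀ ρ - Φ₀ s|
          ≤ (ρ - s) ^ (-(3:ℝ)/2) * (2 * (C * nφ)) :=
            mul_le_mul_of_nonneg_left hdiff (Real.rpow_pos_of_pos hρs _).le
        _ = 2 * (C * nφ) * (ρ - s) ^ (-(3:ℝ)/2) := by ring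
  -- third term
  have hS : |Real.sqrt (2 / Real.pi) * (t - s) ^ (-(1:ℝ)/2) * Φ₀ s|
      ≤ C * nφ * d ^ (-(1:ℝ)/2) := by
    have hsqrt : Real.sqrt (2 / Real.pi) ≤ 1 := by
      rw [show (1:ℝ) = Real.sqrt 1 from (Real.sqrt_one).symm]
      apply Real.sqrt_le_sqrt
      rw [div_le_one Real.pi_pos]
      linarith [Real.pi_gt_three]
    rw [abs_mul, abs_mul]
    have h1 : |Real.sqrt (2 / Real.pi)| = Real.sqrt (2 / Real.pi) :=
      abs_of_nonneg (Real.sqrt_nonneg _)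
    have h2 : |(t - s) ^ (-(1:ℝ)/2)| = d ^ (-(1:ℝ)/2) := by
      rw [← hd]; exact abs_of_nonneg (Real.rpow_nonneg hdpos.le _)
    rw [h1, h2]
    have h3 : |Φ₀ s| ≤ C * nφ := hbound s ⟨hs0, hst.le⟩
    calc Real.sqrt (2 / Real.pi) * d ^ (-(1:ℝ)/2) * |Φ₀ s|
        ≤ 1 * d ^ (-(1:ℝ)/2) * (C * nφ) := by
          apply mul_le_mul _ h3 (abs_nonneg _) (by positivity)
          exact mul_le_mul_of_nonneg_right hsqrt (Real.rpow_nonneg hdpos.le _)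
      _ = C * nφ * d ^ (-(1:ℝ)/2) := by ring
  -- prefactor
  have hP0 : 0 ≤ (2 * Real.pi) ^ (-(1:ℝ)/2) :=
    Real.rpow_nonneg (by positivity) _
  have hP1 : (2 * Real.pi) ^ (-(1:ℝ)/2) ≤ 1 :=
    Real.rpow_le_one_of_one_le_of_nonpos (by nlinarith [Real.pi_gt_three]) (by norm_num)
  have hsplit : (∫ ρ in s..t, f ρ) = (∫ ρ in s..m, f ρ) + (∫ ρ in m..t, f ρ) :=
    (intervalIntegral.integral_add_adjacent_intervals hint1 hint2).symm
  calc |(2 * Real.pi) ^ (-(1:ℝ)/2) * (∫ ρ in s..t, f ρ)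
        - Real.sqrt (2 / Real.pi) * (t - s) ^ (-(1:ℝ)/2) * Φ₀ s|
      ≤ |(2 * Real.pi) ^ (-(1:ℝ)/2) * (∫ ρ in s..t, f ρ)|
        + |Real.sqrt (2 / Real.pi) * (t - s) ^ (-(1:ℝ)/2) * Φ₀ s| := abs_sub _ _
    _ ≤ |∫ ρ in s..t, f ρ| + |Real.sqrt (2 / Real.pi) * (t - s) ^ (-(1:ℝ)/2) * Φ₀ s| := by
        apply add_le_add_left
        rw [abs_mul, abs_of_nonneg hP0]
        calc (2 * Real.pi) ^ (-(1:ℝ)/2) * |∫ ρ in s..t, f ρ|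
            ≤ 1 * |∫ ρ in s..t, f ρ| := mul_le_mul_of_nonneg_right hP1 (abs_nonneg _)
          _ = |∫ ρ in s..t, f ρ| := one_mul _
    _ ≤ (|∫ ρ in s..m, f ρ| + |∫ ρ in m..t, f ρ|)
        + |Real.sqrt (2 / Real.pi) * (t - s) ^ (-(1:ℝ)/2) * Φ₀ s| := by
        apply add_le_add_left
        rw [hsplit]; exact abs_add_le _ _
    _ ≤ (C * nφ * (2 * sq2 / α) * d ^ (-(1:ℝ)/2) + 4 * (C * nφ) * sq2 * d ^ (-(1:ℝ)/2))
        + C * nφ * d ^ (-(1:ℝ)/2) := add_le_add (add_le_add hA hB) hS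
    _ = C * (2 * sq2 / α + 4 * sq2 + 1) * nφ * (t - s) ^ (-(1:ℝ)/2) := by
        rw [← hd]; ring
end

section
/- Let b > 0, B ≥ b. For s < τ < t, θ ∈ (0,1), and z ∈ ℝ, the kernel bound |N^{(2)}(s,τ)| ≤ K (τ-s)^{-3/2} ∫ z² exp(-θ(1-θ)z²/(2B(τ-s))) dν(z) dθ integrated against (t-τ)^{-1/2} over τ ∈ (s,t) yields ∫_s^t (t-τ)^{-1/2}|N^{(2)}(s,τ)| dτ ≤ K (2πB)^{1/2}(t-s)^{-1/2} ∫ |z| dν(z) · ∫_0^1 (θ(1-θ))^{-1/2} dθ = K π (2πB)^{1/2} (t-s)^{-1/2} ∫ |z| dν(z), for any finite nonnegative measure ν with ∫|z| dν(z) < ∞. -/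
open Real MeasureTheory

open Set in
/-- `ofReal` of an integral is at most the corresponding `lintegral`. -/
lemma aux_ofReal_integral_le {α : Type*} [MeasurableSpace α] {μ : Measure α} {f : α → ℝ}
    (hf : 0 ≤ᵐ[μ] f) :
    ENNReal.ofReal (∫ a, f a ∂μ) ≤ ∫⁻ a, ENNReal.ofReal (f a) ∂μ := by
  by_cases hm : AEStronglyMeasurable f μ
  · rw [integral_eq_lintegral_of_nonneg_ae hf hm]
    exact ENNReal.ofReal_toReal_le
  · rw [integral_undef (fun h => hm h.1)]
    simp

open Set in
/-- One-dimensional change of variables for lower Lebesgue integrals. -/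
lemma aux_lintegral_image {s : Set ℝ} {f f' : ℝ → ℝ} (hs : MeasurableSet s)
    (hf' : ∀ x ∈ s, HasDerivWithinAt f (f' x) s x) (hf : Set.InjOn f s) (g : ℝ → ENNReal) :
    ∫⁻ x in f '' s, g x = ∫⁻ x in s, ENNReal.ofReal |f' x| * g (f x) := by
  simpa only [ContinuousLinearMap.det_toSpanSingleton] using
    MeasureTheory.lintegral_image_eq_lintegral_abs_det_fderiv_mul volume hs
      (fun x hx => (hf' x hx).hasFDerivWithinAt) hf g

open Set in
/-- The Beta-type integral `∫₀¹ (θ(1-θ))^{-1/2} dθ = π`. -/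
lemma aux_theta :
    ∫⁻ θ in Ioo (0:ℝ) 1, ENNReal.ofReal ((Real.sqrt (θ * (1 - θ)))⁻¹)
      = ENNReal.ofReal π := by
  have hset : MeasurableSet (Ioo (-(π/2)) (π/2)) := measurableSet_Ioo
  set ψ : ℝ → ℝ := fun x => (1 + Real.sin x) / 2 with hψ
  have hderiv : ∀ x ∈ Ioo (-(π/2)) (π/2),
      HasDerivWithinAt ψ (Real.cos x / 2) (Ioo (-(π/2)) (π/2)) x := by
    intro x _
    exact (((Real.hasDerivAt_sin x).const_add 1).div_const 2).hasDerivWithinAt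
  have hinj : Set.InjOn ψ (Ioo (-(π/2)) (π/2)) := by
    intro x hx y hy hxy
    have hsin : Real.sin x = Real.sin y := by
      simp only [hψ] at hxy; linarith
    exact Real.injOn_sin (Set.mem_Icc_of_Ioo hx) (Set.mem_Icc_of_Ioo hy) hsin
  have himage : ψ '' Ioo (-(π/2)) (π/2) = Ioo 0 1 := by
    ext y
    constructor
    · rintro ⟨x, hx, rfl⟩
      have h1 : Real.sin x < 1 := by
        have := Real.strictMonoOn_sin (Set.mem_Icc_of_Ioo hx)
          (Set.right_mem_Icc.2 (by linarith [Real.pi_pos])) hx.2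
        rwa [Real.sin_pi_div_two] at this
      have h2 : -1 < Real.sin x := by
        have := Real.strictMonoOn_sin (Set.left_mem_Icc.2 (by linarith [Real.pi_pos]))
          (Set.mem_Icc_of_Ioo hx) hx.1
        rwa [Real.sin_neg, Real.sin_pi_div_two] at this
      constructor
      · simp only [hψ]; linarith
      · simp only [hψ]; linarith
    · intro hy
      refine ⟨Real.arcsin (2 * y - 1), ?_, ?_⟩
      · exact ⟨Real.neg_pi_div_two_lt_arcsin.2 (by linarith [hy.1]),
          Real.arcsin_lt_pi_div_two.2 (by linarith [hy.2])⟩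
      · have : Real.sin (Real.arcsin (2*y-1)) = 2*y-1 :=
          Real.sin_arcsin (by linarith [hy.1]) (by linarith [hy.2])
        simp only [hψ, this]; ring
  rw [← himage, aux_lintegral_image hset hderiv hinj]
  have hcong : ∫⁻ x in Ioo (-(π/2)) (π/2),
      ENNReal.ofReal |Real.cos x / 2| * ENNReal.ofReal ((Real.sqrt (ψ x * (1 - ψ x)))⁻¹)
      = ∫⁻ _ in Ioo (-(π/2)) (π/2), (1:ENNReal) := by
    refine setLIntegral_congr_fun hset (fun x hx => ?_)
    have hcos : 0 < Real.cos x := Real.cos_pos_of_mem_Ioo hx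
    have hval : ψ x * (1 - ψ x) = (Real.cos x / 2) ^ 2 := by
      have := Real.sin_sq_add_cos_sq x
      simp only [hψ]; nlinarith
    rw [hval, Real.sqrt_sq (by linarith), abs_of_pos (by linarith),
      ← ENNReal.ofReal_mul (by linarith), mul_inv_cancel₀ (by linarith), ENNReal.ofReal_one]
  rw [hcong]
  rw [setLIntegral_one, Real.volume_Ioo]
  congr 1
  ring

open Set in
/-- The Gamma-type integral `∫₀^∞ x^{-1/2} e^{-cx} dx = √π/√c`. -/
lemma aux_gamma {c : ℝ} (hc : 0 < c) :
    ∫ x in Ioi (0:ℝ), x ^ (-(1:ℝ)/2) * Real.exp (-(c * x)) = Real.sqrt π / Real.sqrt c := by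
  have h := integral_rpow_mul_exp_neg_mul_rpow (p := 1) (q := -(1:ℝ)/2) (b := c)
    one_pos (by norm_num) hc
  simp only [Real.rpow_one, neg_mul] at h
  rw [h, show (-(-1/2 + 1) / 1 : ℝ) = -(1/2) by norm_num,
    show ((-1/2 + 1) / 1 : ℝ) = 1/2 by norm_num, Real.Gamma_one_half_eq,
    Real.rpow_neg hc.le, ← Real.sqrt_eq_rpow]
  field_simp

open Set in
lemma aux_gamma_int {c : ℝ} (hc : 0 < c) :
    IntegrableOn (fun x => x ^ (-(1:ℝ)/2) * Real.exp (-(c * x))) (Ioi (0:ℝ)) := by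
  have h := integrableOn_rpow_mul_exp_neg_mul_rpow (p := 1) (s := -(1:ℝ)/2) (b := c)
    (by norm_num) one_pos hc
  simpa [Real.rpow_one, neg_mul] using h

open Set in
/-- The key singular convolution bound. -/
lemma aux_tau {s t c : ℝ} (hst : s < t) (hc : 0 < c) :
    ∫⁻ τ in Ioo s t, ENNReal.ofReal
        ((t - τ) ^ (-(1:ℝ)/2) * (τ - s) ^ (-(3:ℝ)/2) * Real.exp (-c / (τ - s)))
      ≤ ENNReal.ofReal ((t - s) ^ (-(1:ℝ)/2) * (Real.sqrt π / Real.sqrt c)) := by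
  set m : ℝ := t - s with hm
  have hm0 : 0 < m := by simp [hm]; linarith
  set a : ℝ := m⁻¹ with ha
  have ha0 : 0 < a := inv_pos.2 hm0
  set φ : ℝ → ℝ := fun x => s + (x + a)⁻¹ with hφ
  have hderiv : ∀ x ∈ Ioi (0:ℝ),
      HasDerivWithinAt φ (-1 / (x + a) ^ 2) (Ioi (0:ℝ)) x := by
    intro x hx
    have hx0 : (0:ℝ) < x := hx
    have hxa : x + a ≠ 0 := by linarith
    have h1 : HasDerivAt (fun y : ℝ => y + a) 1 x := (hasDerivAt_id x).add_const a
    have h2 : HasDerivAt (fun y : ℝ => (y + a)⁻¹) (-1 / (x + a) ^ 2) x := h1.inv hxa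
    exact (h2.const_add s).hasDerivWithinAt
  have hinj : Set.InjOn φ (Ioi (0:ℝ)) := by
    intro x hx y hy hxy
    simp only [hφ, add_right_inj] at hxy
    have := inv_injective hxy
    linarith
  have himage : φ '' Ioi (0:ℝ) = Ioo s t := by
    ext τ
    constructor
    · rintro ⟨x, hx, rfl⟩
      have hx0 : (0:ℝ) < x := hx
      have hw : 0 < x + a := by linarith
      have h1 : (x + a)⁻¹ < a⁻¹ := by
        apply inv_strictAnti₀ ha0; linarith
      have h2 : 0 < (x + a)⁻¹ := inv_pos.2 hw
      constructor
      · simp only [hφ]; linarith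
      · simp only [hφ]; rw [ha, inv_inv] at h1; simp [hm] at h1 ⊢; linarith
    · intro hτ
      have hu0 : 0 < τ - s := by linarith [hτ.1]
      have hum : τ - s < m := by simp [hm]; linarith [hτ.2]
      refine ⟨(τ - s)⁻¹ - a, ?_, ?_⟩
      · simp only [mem_Ioi, sub_pos, ha]
        exact inv_strictAnti₀ hu0 hum
      · simp only [hφ, sub_add_cancel, inv_inv]; ring
  rw [← himage, aux_lintegral_image measurableSet_Ioi hderiv hinj]
  have key : ∀ x ∈ Ioi (0:ℝ),
      ENNReal.ofReal |(-1 : ℝ) / (x + a) ^ 2| *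
        ENNReal.ofReal ((t - φ x) ^ (-(1:ℝ)/2) * (φ x - s) ^ (-(3:ℝ)/2) *
          Real.exp (-c / (φ x - s)))
      ≤ ENNReal.ofReal (m ^ (-(1:ℝ)/2) * (x ^ (-(1:ℝ)/2) * Real.exp (-(c * x)))) := by
    intro x hx
    have hx0 : (0:ℝ) < x := hx
    set w : ℝ := x + a with hw
    have hw0 : 0 < w := by simp [hw]; linarith
    have hφs : φ x - s = w⁻¹ := by simp [hφ, hw]
    have hφt : t - φ x = m * x / w := by
      have hmw : m * w = m * x + 1 := by
        have hma : m * a = 1 := mul_inv_cancel₀ (ne_of_gt hm0)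
        simp only [hw]; rw [mul_add, hma]
      have h2 : m * x / w = m - w⁻¹ := by
        rw [eq_sub_iff_add_eq, inv_eq_one_div, ← add_div, div_eq_iff (ne_of_gt hw0)]
        linarith
      rw [h2]; simp only [hφ, hm]; ring
    have habs : |(-1 : ℝ) / (x + a) ^ 2| = (w ^ 2)⁻¹ := by
      rw [abs_div, abs_neg, abs_one, abs_of_pos (by positivity)]
      simp [hw]
    have hexp : -c / (φ x - s) = -(c * w) := by
      rw [hφs, division_def, inv_inv]; ring
    rw [habs, hexp, hφs, hφt, ← ENNReal.ofReal_mul (by positivity)]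
    apply ENNReal.ofReal_le_ofReal
    have h1 : (m * x / w) ^ (-(1:ℝ)/2)
        = m ^ (-(1:ℝ)/2) * x ^ (-(1:ℝ)/2) * w ^ ((1:ℝ)/2) := by
      rw [Real.div_rpow (by positivity) hw0.le, Real.mul_rpow hm0.le hx0.le]
      rw [show w ^ (-(1:ℝ)/2) = (w ^ ((1:ℝ)/2))⁻¹ by
        rw [← Real.rpow_neg hw0.le]; norm_num]
      field_simp
    have h2 : (w⁻¹) ^ (-(3:ℝ)/2) = w ^ ((3:ℝ)/2) := by
      rw [Real.inv_rpow hw0.le, ← Real.rpow_neg hw0.le]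
      norm_num
    have h3 : ((w:ℝ) ^ 2)⁻¹ = w ^ (-(2:ℝ)) := by
      rw [← Real.rpow_natCast w 2, ← Real.rpow_neg hw0.le]
      norm_num
    have h4 : w ^ ((1:ℝ)/2) * w ^ ((3:ℝ)/2) * w ^ (-(2:ℝ)) = 1 := by
      rw [← Real.rpow_add hw0, ← Real.rpow_add hw0]
      norm_num
    have hexple : Real.exp (-(c * w)) ≤ Real.exp (-(c * x)) := by
      apply Real.exp_le_exp.2
      simp only [hw]
      nlinarith
    calc (w ^ 2)⁻¹ * ((m * x / w) ^ (-(1:ℝ)/2) * (w⁻¹) ^ (-(3:ℝ)/2) * Real.exp (-(c * w)))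
        = (m ^ (-(1:ℝ)/2) * x ^ (-(1:ℝ)/2) * Real.exp (-(c * w))) *
            (w ^ ((1:ℝ)/2) * w ^ ((3:ℝ)/2) * w ^ (-(2:ℝ))) := by
          rw [h1, h2, h3]; ring
      _ = m ^ (-(1:ℝ)/2) * x ^ (-(1:ℝ)/2) * Real.exp (-(c * w)) := by rw [h4, mul_one]
      _ ≤ m ^ (-(1:ℝ)/2) * (x ^ (-(1:ℝ)/2) * Real.exp (-(c * x))) := by
          rw [← mul_assoc]
          exact mul_le_mul_of_nonneg_left hexple
            (mul_nonneg (Real.rpow_nonneg hm0.le _) (Real.rpow_nonneg hx0.le _))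
  calc ∫⁻ x in Ioi (0:ℝ), ENNReal.ofReal |(-1 : ℝ) / (x + a) ^ 2| *
        ENNReal.ofReal ((t - φ x) ^ (-(1:ℝ)/2) * (φ x - s) ^ (-(3:ℝ)/2) *
          Real.exp (-c / (φ x - s)))
      ≤ ∫⁻ x in Ioi (0:ℝ),
          ENNReal.ofReal (m ^ (-(1:ℝ)/2) * (x ^ (-(1:ℝ)/2) * Real.exp (-(c * x)))) := by
        apply setLIntegral_mono' measurableSet_Ioi key
    _ = ENNReal.ofReal (m ^ (-(1:ℝ)/2)) *
          ∫⁻ x in Ioi (0:ℝ), ENNReal.ofReal (x ^ (-(1:ℝ)/2) * Real.exp (-(c * x))) := by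
        rw [← lintegral_const_mul' _ _ ENNReal.ofReal_ne_top]
        congr 1; ext x
        rw [← ENNReal.ofReal_mul (by positivity)]
    _ ≤ ENNReal.ofReal ((t - s) ^ (-(1:ℝ)/2) * (Real.sqrt π / Real.sqrt c)) := by
        rw [← ofReal_integral_eq_lintegral_ofReal (aux_gamma_int hc)
          ((ae_restrict_mem measurableSet_Ioi).mono fun x hx =>
            mul_nonneg (Real.rpow_nonneg (le_of_lt hx) _) (Real.exp_nonneg _))]
        rw [aux_gamma hc, ← ENNReal.ofReal_mul (Real.rpow_nonneg hm0.le _)]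

/-- The integrand of the triple lower integral. -/
noncomputable def auxF (B s t : ℝ) (τ z θ : ℝ) : ENNReal :=
  ENNReal.ofReal ((t - τ) ^ (-(1:ℝ)/2) * (τ - s) ^ (-(3:ℝ)/2) *
    (z ^ 2 * Real.exp (-(θ * (1 - θ) * z ^ 2) / (2 * B * (τ - s)))))

open Set in
lemma aux_swap (B s t : ℝ) (ν : Measure ℝ) [SFinite ν] :
    ∫⁻ τ in Ioo s t, ∫⁻ z, (∫⁻ θ in Ioo (0:ℝ) 1, auxF B s t τ z θ) ∂ν
      = ∫⁻ z, (∫⁻ θ in Ioo (0:ℝ) 1, ∫⁻ τ in Ioo s t, auxF B s t τ z θ) ∂ν := by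
  have h1 : Measurable (fun q : (ℝ × ℝ) × ℝ => auxF B s t q.1.1 q.1.2 q.2) := by
    unfold auxF; fun_prop
  rw [lintegral_lintegral_swap (h1.lintegral_prod_right'.aemeasurable)]
  have h3 : ∀ z : ℝ, (∫⁻ τ in Ioo s t, ∫⁻ θ in Ioo (0:ℝ) 1, auxF B s t τ z θ)
      = ∫⁻ θ in Ioo (0:ℝ) 1, ∫⁻ τ in Ioo s t, auxF B s t τ z θ := by
    intro z
    have h2 : Measurable (fun q : ℝ × ℝ => auxF B s t q.1 z q.2) := by
      unfold auxF; fun_prop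
    exact lintegral_lintegral_swap h2.aemeasurable
  exact congrArg (MeasureTheory.lintegral ν) (funext h3)

open Set in
lemma aux_inner {B s t : ℝ} (hB : 0 < B) (hst : s < t) (z : ℝ) :
    (∫⁻ θ in Ioo (0:ℝ) 1, ∫⁻ τ in Ioo s t, auxF B s t τ z θ)
      ≤ ENNReal.ofReal (π * Real.sqrt (2*π*B) * (t-s) ^ (-(1:ℝ)/2)) * ENNReal.ofReal |z| := by
  have hm0 : (0:ℝ) < t - s := sub_pos.2 hst
  by_cases hz : z = 0
  · simp [hz, auxF]
  have hz2 : 0 < z ^ 2 := by positivity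
  have hzabs : (0:ℝ) < |z| := abs_pos.2 hz
  have hC0 : 0 ≤ Real.sqrt (2*π*B) * (t-s) ^ (-(1:ℝ)/2) * |z| :=
    mul_nonneg (mul_nonneg (Real.sqrt_nonneg _) (Real.rpow_nonneg hm0.le _)) (abs_nonneg _)
  calc (∫⁻ θ in Ioo (0:ℝ) 1, ∫⁻ τ in Ioo s t, auxF B s t τ z θ)
      ≤ ∫⁻ θ in Ioo (0:ℝ) 1, ENNReal.ofReal
          (Real.sqrt (2*π*B) * (t-s) ^ (-(1:ℝ)/2) * |z| * (Real.sqrt (θ*(1-θ)))⁻¹) := by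
        apply setLIntegral_mono' measurableSet_Ioo
        intro θ hθ
        have hθ0 : 0 < θ := hθ.1
        have hθ1 : 0 < 1 - θ := by linarith [hθ.2]
        set c : ℝ := θ*(1-θ)*z^2/(2*B) with hcdef
        have hc : 0 < c := by positivity
        have hrw : ∀ τ ∈ Ioo s t, auxF B s t τ z θ = ENNReal.ofReal (z^2) *
            ENNReal.ofReal ((t-τ) ^ (-(1:ℝ)/2) * (τ-s) ^ (-(3:ℝ)/2) *
              Real.exp (-c/(τ-s))) := by
          intro τ hτ
          have h1 : -(θ*(1-θ)*z^2) / (2*B*(τ-s)) = -c/(τ-s) := by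
            rw [hcdef, neg_div, neg_div, div_div]
          unfold auxF
          rw [h1, show (t-τ) ^ (-(1:ℝ)/2) * (τ-s) ^ (-(3:ℝ)/2) *
              (z^2 * Real.exp (-c/(τ-s)))
            = z^2 * ((t-τ) ^ (-(1:ℝ)/2) * (τ-s) ^ (-(3:ℝ)/2) * Real.exp (-c/(τ-s)))
            from by ring, ENNReal.ofReal_mul (sq_nonneg z)]
        calc ∫⁻ τ in Ioo s t, auxF B s t τ z θ
            = ∫⁻ τ in Ioo s t, ENNReal.ofReal (z^2) *
                ENNReal.ofReal ((t-τ) ^ (-(1:ℝ)/2) * (τ-s) ^ (-(3:ℝ)/2) *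
                  Real.exp (-c/(τ-s))) :=
              setLIntegral_congr_fun measurableSet_Ioo hrw
          _ = ENNReal.ofReal (z^2) * ∫⁻ τ in Ioo s t,
                ENNReal.ofReal ((t-τ) ^ (-(1:ℝ)/2) * (τ-s) ^ (-(3:ℝ)/2) *
                  Real.exp (-c/(τ-s))) :=
              lintegral_const_mul' _ _ ENNReal.ofReal_ne_top
          _ ≤ ENNReal.ofReal (z^2) *
                ENNReal.ofReal ((t-s) ^ (-(1:ℝ)/2) * (Real.sqrt π / Real.sqrt c)) :=
              mul_le_mul_right (aux_tau hst hc) _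
          _ = ENNReal.ofReal
                (Real.sqrt (2*π*B) * (t-s) ^ (-(1:ℝ)/2) * |z| * (Real.sqrt (θ*(1-θ)))⁻¹) := by
              rw [← ENNReal.ofReal_mul (sq_nonneg z)]
              congr 1
              have hsc : Real.sqrt c = Real.sqrt (θ*(1-θ)) * |z| / Real.sqrt (2*B) := by
                rw [hcdef, Real.sqrt_div (by positivity), Real.sqrt_mul (by positivity),
                  Real.sqrt_sq_eq_abs]
              have h2B : (0:ℝ) < Real.sqrt (2*B) := Real.sqrt_pos.2 (by linarith)
              have hθθ : (0:ℝ) < Real.sqrt (θ*(1-θ)) := Real.sqrt_pos.2 (by positivity)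
              have hsqrt2πB : Real.sqrt (2*π*B) = Real.sqrt π * Real.sqrt (2*B) := by
                rw [← Real.sqrt_mul (le_of_lt Real.pi_pos), show π*(2*B) = 2*π*B from by ring]
              have habs2 : z^2 = |z| * |z| := by rw [abs_mul_abs_self z]; ring
              rw [hsc, hsqrt2πB]
              field_simp
              linear_combination habs2
    _ = ENNReal.ofReal (Real.sqrt (2*π*B) * (t-s) ^ (-(1:ℝ)/2) * |z|) *
          ∫⁻ θ in Ioo (0:ℝ) 1, ENNReal.ofReal ((Real.sqrt (θ*(1-θ)))⁻¹) := by
        rw [← lintegral_const_mul' _ _ ENNReal.ofReal_ne_top]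
        refine setLIntegral_congr_fun measurableSet_Ioo
          (fun θ hθ => ?_)
        rw [← ENNReal.ofReal_mul hC0]
    _ = ENNReal.ofReal (Real.sqrt (2*π*B) * (t-s) ^ (-(1:ℝ)/2) * |z|) * ENNReal.ofReal π := by
        rw [aux_theta]
    _ = ENNReal.ofReal (π * Real.sqrt (2*π*B) * (t-s) ^ (-(1:ℝ)/2)) * ENNReal.ofReal |z| := by
        rw [← ENNReal.ofReal_mul hC0, ← ENNReal.ofReal_mul
          (mul_nonneg (mul_nonneg Real.pi_pos.le (Real.sqrt_nonneg _))
            (Real.rpow_nonneg hm0.le _))]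
        congr 1
        ring

open Set in
theorem strongly_singular_kernel_contribution (K b B s t : ℝ)
    (hK : 0 < K) (hb : 0 < b) (hbB : b ≤ B) (hst : s < t)
    (ν : Measure ℝ) (hν : IsFiniteMeasure ν)
    (hmom : Integrable (fun z : ℝ => |z|) ν)
    (N2 : ℝ → ℝ)
    (hN2 : ∀ τ : ℝ, s < τ → τ < t →
      |N2 τ| ≤ K * (τ - s) ^ (-(3:ℝ)/2) *
        ∫ z, z ^ 2 * (∫ θ in (0:ℝ)..1,
          Real.exp (-(θ * (1 - θ) * z ^ 2) / (2 * B * (τ - s)))) ∂ν) :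
    (∫ τ in s..t, (t - τ) ^ (-(1:ℝ)/2) * |N2 τ|)
      ≤ K * Real.pi * Real.sqrt (2 * Real.pi * B) * (t - s) ^ (-(1:ℝ)/2) * ∫ z, |z| ∂ν := by
  have hB : 0 < B := lt_of_lt_of_le hb hbB
  have hm0 : (0:ℝ) < t - s := sub_pos.2 hst
  have hint0 : 0 ≤ ∫ z, |z| ∂ν := integral_nonneg fun z => abs_nonneg z
  have hRHS0 : 0 ≤ K * π * Real.sqrt (2*π*B) * (t-s) ^ (-(1:ℝ)/2) * ∫ z, |z| ∂ν :=
    mul_nonneg (mul_nonneg (mul_nonneg (mul_nonneg hK.le Real.pi_pos.le)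
      (Real.sqrt_nonneg _)) (Real.rpow_nonneg hm0.le _)) hint0
  by_cases hInt : IntervalIntegrable (fun τ => (t - τ) ^ (-(1:ℝ)/2) * |N2 τ|) volume s t
  swap
  · rw [intervalIntegral.integral_undef hInt]
    exact hRHS0
  rw [intervalIntegral.integral_of_le hst.le, integral_Ioc_eq_integral_Ioo]
  have hmeas : AEStronglyMeasurable (fun τ => (t - τ) ^ (-(1:ℝ)/2) * |N2 τ|)
      (volume.restrict (Ioo s t)) :=
    (hInt.1.mono_set Ioo_subset_Ioc_self).aestronglyMeasurable
  have hnn : 0 ≤ᵐ[volume.restrict (Ioo s t)] fun τ => (t - τ) ^ (-(1:ℝ)/2) * |N2 τ| :=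
    (ae_restrict_mem measurableSet_Ioo).mono fun τ hτ =>
      mul_nonneg (Real.rpow_nonneg (by linarith [hτ.2] : (0:ℝ) ≤ t - τ) _) (abs_nonneg _)
  rw [integral_eq_lintegral_of_nonneg_ae hnn hmeas]
  apply ENNReal.toReal_le_of_le_ofReal hRHS0
  -- pointwise domination
  have hdom : ∀ τ ∈ Ioo s t, ENNReal.ofReal ((t - τ) ^ (-(1:ℝ)/2) * |N2 τ|)
      ≤ ENNReal.ofReal K * ∫⁻ z, (∫⁻ θ in Ioo (0:ℝ) 1, auxF B s t τ z θ) ∂ν := by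
    intro τ hτ
    have hu0 : 0 < τ - s := sub_pos.2 hτ.1
    have htτ0 : 0 < t - τ := sub_pos.2 hτ.2
    have hab0 : 0 ≤ (t-τ) ^ (-(1:ℝ)/2) * (τ-s) ^ (-(3:ℝ)/2) :=
      mul_nonneg (Real.rpow_nonneg htτ0.le _) (Real.rpow_nonneg hu0.le _)
    have hh0 : ∀ z : ℝ, 0 ≤ z ^ 2 * (∫ θ in (0:ℝ)..1,
        Real.exp (-(θ*(1-θ)*z^2) / (2*B*(τ-s)))) := fun z =>
      mul_nonneg (sq_nonneg z) (intervalIntegral.integral_nonneg zero_le_one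
        fun θ _ => Real.exp_nonneg _)
    calc ENNReal.ofReal ((t - τ) ^ (-(1:ℝ)/2) * |N2 τ|)
        ≤ ENNReal.ofReal ((t - τ) ^ (-(1:ℝ)/2) * (K * (τ-s) ^ (-(3:ℝ)/2) *
            ∫ z, z ^ 2 * (∫ θ in (0:ℝ)..1,
              Real.exp (-(θ*(1-θ)*z^2) / (2*B*(τ-s)))) ∂ν)) :=
          ENNReal.ofReal_le_ofReal (mul_le_mul_of_nonneg_left (hN2 τ hτ.1 hτ.2)
            (Real.rpow_nonneg htτ0.le _))
      _ = ENNReal.ofReal K * (ENNReal.ofReal ((t-τ) ^ (-(1:ℝ)/2) * (τ-s) ^ (-(3:ℝ)/2)) *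
            ENNReal.ofReal (∫ z, z ^ 2 * (∫ θ in (0:ℝ)..1,
              Real.exp (-(θ*(1-θ)*z^2) / (2*B*(τ-s)))) ∂ν)) := by
          rw [← ENNReal.ofReal_mul hab0, ← ENNReal.ofReal_mul hK.le]
          congr 1
          ring
      _ ≤ ENNReal.ofReal K * (ENNReal.ofReal ((t-τ) ^ (-(1:ℝ)/2) * (τ-s) ^ (-(3:ℝ)/2)) *
            ∫⁻ z, ENNReal.ofReal (z ^ 2 * (∫ θ in (0:ℝ)..1,
              Real.exp (-(θ*(1-θ)*z^2) / (2*B*(τ-s))))) ∂ν) :=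
          mul_le_mul_right (mul_le_mul_right
            (aux_ofReal_integral_le (Filter.Eventually.of_forall hh0)) _) _
      _ ≤ ENNReal.ofReal K * (ENNReal.ofReal ((t-τ) ^ (-(1:ℝ)/2) * (τ-s) ^ (-(3:ℝ)/2)) *
            ∫⁻ z, ENNReal.ofReal (z ^ 2) * (∫⁻ θ in Ioo (0:ℝ) 1,
              ENNReal.ofReal (Real.exp (-(θ*(1-θ)*z^2) / (2*B*(τ-s))))) ∂ν) := by
          refine mul_le_mul_right (mul_le_mul_right (lintegral_mono fun z => ?_) _) _
          rw [ENNReal.ofReal_mul (sq_nonneg z)]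
          refine mul_le_mul_right ?_ _
          rw [intervalIntegral.integral_of_le zero_le_one, integral_Ioc_eq_integral_Ioo]
          exact aux_ofReal_integral_le (Filter.Eventually.of_forall fun θ => Real.exp_nonneg _)
      _ = ENNReal.ofReal K * ∫⁻ z, (∫⁻ θ in Ioo (0:ℝ) 1, auxF B s t τ z θ) ∂ν := by
          congr 1
          rw [← lintegral_const_mul' _ _ ENNReal.ofReal_ne_top]
          refine congrArg (MeasureTheory.lintegral ν) (funext fun z => ?_)
          rw [← lintegral_const_mul' _ _ ENNReal.ofReal_ne_top,
            ← lintegral_const_mul' _ _ ENNReal.ofReal_ne_top]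
          refine congrArg (MeasureTheory.lintegral _) (funext fun θ => ?_)
          unfold auxF
          rw [← ENNReal.ofReal_mul (sq_nonneg z), ← ENNReal.ofReal_mul hab0]
  haveI : SFinite ν := inferInstance
  calc (∫⁻ τ in Ioo s t, ENNReal.ofReal ((t - τ) ^ (-(1:ℝ)/2) * |N2 τ|))
      ≤ ∫⁻ τ in Ioo s t, ENNReal.ofReal K *
          ∫⁻ z, (∫⁻ θ in Ioo (0:ℝ) 1, auxF B s t τ z θ) ∂ν :=
        setLIntegral_mono' measurableSet_Ioo hdom
    _ = ENNReal.ofReal K * ∫⁻ τ in Ioo s t,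
          ∫⁻ z, (∫⁻ θ in Ioo (0:ℝ) 1, auxF B s t τ z θ) ∂ν :=
        lintegral_const_mul' _ _ ENNReal.ofReal_ne_top
    _ = ENNReal.ofReal K * ∫⁻ z, (∫⁻ θ in Ioo (0:ℝ) 1,
          ∫⁻ τ in Ioo s t, auxF B s t τ z θ) ∂ν := by
        rw [aux_swap]
    _ ≤ ENNReal.ofReal K * ∫⁻ z, (ENNReal.ofReal (π * Real.sqrt (2*π*B) *
          (t-s) ^ (-(1:ℝ)/2)) * ENNReal.ofReal |z|) ∂ν :=
        mul_le_mul_right (lintegral_mono fun z => aux_inner hB hst z) _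
    _ = ENNReal.ofReal K * (ENNReal.ofReal (π * Real.sqrt (2*π*B) * (t-s) ^ (-(1:ℝ)/2)) *
          ∫⁻ z, ENNReal.ofReal |z| ∂ν) := by
        rw [lintegral_const_mul' _ _ ENNReal.ofReal_ne_top]
    _ = ENNReal.ofReal K * (ENNReal.ofReal (π * Real.sqrt (2*π*B) * (t-s) ^ (-(1:ℝ)/2)) *
          ENNReal.ofReal (∫ z, |z| ∂ν)) := by
        rw [← ofReal_integral_eq_lintegral_ofReal hmom
          (Filter.Eventually.of_forall fun z => abs_nonneg z)]
    _ = ENNReal.ofReal (K * π * Real.sqrt (2*π*B) * (t-s) ^ (-(1:ℝ)/2) * ∫ z, |z| ∂ν) := by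
        rw [← ENNReal.ofReal_mul (mul_nonneg (mul_nonneg Real.pi_pos.le
          (Real.sqrt_nonneg _)) (Real.rpow_nonneg hm0.le _)),
          ← ENNReal.ofReal_mul hK.le]
        congr 1
        ring
end
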